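/- Let k be a commutative ring, X a finite poset, and let a ≤ b and c ≤ d be elements of X. Then the k-module of natural transformations from M_{a,b} to M_{c,d} in the functor category F_{X,k} is isomorphic to k if c ≤ a ≤ d ≤ b, and is the zero module otherwise. -/

import Mathlib

open CategoryTheory
open scoped Classical
namespace PaperInterval
noncomputable def charFunctor (k : Type) [CommRing k] (P : Type) [PartialOrder P] (S : P → Prop)
    (hS : ∀ ⦃x y z : P⦄, x ≤ y → y ≤ z → S x → S z → S y) :
    P ⥤ ModuleCat.{0} k where
  obj x := ModuleCat.of k (PLift (S x) → k)
  map {x x'} _ := ModuleCat.ofHom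
    { toFun := fun g _ => if h : S x then g ⟨h⟩ else 0
      map_add' := by intro g₁ g₂; funext h'; by_cases h : S x <;> simp [h]
      map_smul' := by intro r g; funext h'; by_cases h : S x <;> simp [h] }
  map_id x := by
    apply ModuleCat.hom_ext; apply LinearMap.ext; intro g; funext h'
    by_cases h : S x
    · simp only [ModuleCat.hom_ofHom, ModuleCat.hom_id, LinearMap.id_coe, id_eq,
        LinearMap.coe_mk, AddHom.coe_mk, dif_pos h]
    · exact absurd h'.down h
  map_comp {x y z} f g := by
    apply ModuleCat.hom_ext; apply LinearMap.ext; intro u; funext h'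
    by_cases hx : S x
    · have hy : S y := hS (leOfHom f) (leOfHom g) hx h'.down
      simp [ModuleCat.hom_ofHom, ModuleCat.hom_comp, dif_pos hx, dif_pos hy]
    · by_cases hy : S y <;>
        simp [ModuleCat.hom_ofHom, ModuleCat.hom_comp, dif_neg hx, hy]

noncomputable def Mab (k : Type) [CommRing k] (X : Type) [PartialOrder X] (a b : X) :
    X ⥤ ModuleCat.{0} k :=
  charFunctor k X (fun x => a ≤ x ∧ x ≤ b)
    (fun _ _ _ h1 h2 hx hz => ⟨hx.1.trans h1, h2.trans hz.2⟩)

noncomputable def Pfun (k : Type) [CommRing k] (P : Type) [PartialOrder P] (p : P) :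
    P ⥤ ModuleCat.{0} k :=
  charFunctor k P (fun z => p ≤ z) (fun _ _ _ h1 _ hx _ => hx.trans h1)

noncomputable def Ifun (k : Type) [CommRing k] (P : Type) [PartialOrder P] (p : P) :
    P ⥤ ModuleCat.{0} k :=
  charFunctor k P (fun z => z ≤ p) (fun _ _ _ _ h2 _ hz => h2.trans hz)

section Aux
variable {k : Type} [CommRing k] {X : Type} [PartialOrder X]

lemma Mab_map_apply (a b : X) {x x' : X} (f : x ⟶ x') (g : (Mab k X a b).obj x)
    (h' : PLift (a ≤ x' ∧ x' ≤ b)) :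
    (Mab k X a b).map f g h' = if h : a ≤ x ∧ x ≤ b then g ⟨h⟩ else 0 := by
  by_cases h : a ≤ x ∧ x ≤ b <;>
    simp [Mab, charFunctor, h] <;> rfl

lemma obj_eq_zero (a b : X) (x : X) (hx : ¬(a ≤ x ∧ x ≤ b)) (g : (Mab k X a b).obj x) :
    g = 0 := by
  funext p; exact absurd p.down hx

/-- Key determination lemma. -/
lemma key (a b c d : X) (hab : a ≤ b) (η : Mab k X a b ⟶ Mab k X c d) (x : X)
    (g : (Mab k X a b).obj x) (hx : PLift (c ≤ x ∧ x ≤ d)) :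
    η.app x g hx = if h : (a ≤ x ∧ x ≤ b) ∧ (c ≤ a ∧ a ≤ d) then
      g ⟨h.1⟩ * η.app a (fun _ => 1) ⟨h.2⟩ else 0 := by
  by_cases hax : a ≤ x ∧ x ≤ b
  · have hg : g = g ⟨hax⟩ • (fun _ => (1 : k)) := by
      funext p
      have hp : p = ⟨hax⟩ := Subsingleton.elim _ _
      rw [hp]; simp
    have hnat := η.naturality (homOfLE hax.1)
    have hone : (Mab k X a b).map (homOfLE hax.1) (fun _ => (1 : k)) = (fun _ => (1 : k)) := by
      funext h'
      exact (Mab_map_apply (k := k) a b _ _ h').trans <| dif_pos ⟨le_refl a, hab⟩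
    have h2 : η.app x (fun _ => (1 : k)) hx
        = (Mab k X c d).map (homOfLE hax.1) (η.app a (fun _ => 1)) hx := by
      have h3 : η.app x ((Mab k X a b).map (homOfLE hax.1) (fun _ => (1 : k)))
          = (Mab k X c d).map (homOfLE hax.1) (η.app a (fun _ => 1)) :=
        ConcreteCategory.congr_hom hnat (fun _ => (1 : k))
      rw [hone] at h3
      exact congrFun h3 hx
    have hval : η.app x g hx = g ⟨hax⟩ * η.app x (fun _ => (1 : k)) hx := by
      conv_lhs => rw [hg]
      exact congrFun ((η.app x).hom.map_smul (g ⟨hax⟩) (fun _ => (1 : k))) hx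
    rw [hval, h2, Mab_map_apply]
    by_cases hca : c ≤ a ∧ a ≤ d
    · rw [dif_pos hca, dif_pos ⟨hax, hca⟩]
    · rw [dif_neg hca, dif_neg (fun h => hca h.2), mul_zero]
  · rw [obj_eq_zero a b x hax g, map_zero, dif_neg (fun h => hax h.1)]
    rfl

/-- A natural transformation `M_{a,b} ⟶ M_{c,d}` with "value" `r`. -/
noncomputable def tau (a b c d : X) (hca : c ≤ a) (hdb : d ≤ b) (r : k) :
    Mab k X a b ⟶ Mab k X c d where
  app x := ModuleCat.ofHom
    { toFun := fun g hx => if h : a ≤ x then r * g ⟨⟨h, (hx.down.2.trans hdb)⟩⟩ else 0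
      map_add' := by intro g₁ g₂; funext hx; by_cases h : a ≤ x <;> simp [h, mul_add]
      map_smul' := by
        intro s g; funext hx; by_cases h : a ≤ x <;> simp [h, mul_left_comm] }
  naturality {x x'} f := by
    apply ModuleCat.hom_ext; apply LinearMap.ext; intro g; funext hx'
    have hxx' := leOfHom f
    show (if h : a ≤ x' then
        r * ((Mab k X a b).map f g) ⟨⟨h, (hx'.down.2.trans hdb)⟩⟩ else 0)
      = (Mab k X c d).map f
          ((fun hx => if h : a ≤ x then r * g ⟨⟨h, (hx.down.2.trans hdb)⟩⟩ else 0) :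
            (Mab k X c d).obj x) hx'
    erw [Mab_map_apply c d]
    by_cases hax : a ≤ x
    · have hax' : a ≤ x' := hax.trans hxx'
      have hxd : x ≤ d := hxx'.trans hx'.down.2
      have hcx : c ≤ x ∧ x ≤ d := ⟨hca.trans hax, hxd⟩
      have hxb : a ≤ x ∧ x ≤ b := ⟨hax, hxd.trans hdb⟩
      rw [dif_pos hax', dif_pos hcx, dif_pos hax, Mab_map_apply a b, dif_pos hxb]
    · have hab' : ¬(a ≤ x ∧ x ≤ b) := fun h => hax h.1
      by_cases hax' : a ≤ x'
      · rw [dif_pos hax', Mab_map_apply a b, dif_neg hab', mul_zero]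
        by_cases hcx : c ≤ x ∧ x ≤ d
        · rw [dif_pos hcx, dif_neg hax]
        · rw [dif_neg hcx]
      · rw [dif_neg hax']
        by_cases hcx : c ≤ x ∧ x ≤ d
        · rw [dif_pos hcx, dif_neg hax]
        · rw [dif_neg hcx]

lemma tau_apply (a b c d : X) (hca : c ≤ a) (hdb : d ≤ b) (r : k) (x : X)
    (g : (Mab k X a b).obj x) (hx : PLift (c ≤ x ∧ x ≤ d)) :
    (tau a b c d hca hdb r).app x g hx
      = if h : a ≤ x then r * g ⟨⟨h, (hx.down.2.trans hdb)⟩⟩ else 0 := rfl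

end Aux

/-- For a commutative ring `k`, a finite poset `X` and intervals
`[a,b]`, `[c,d]` of `X`, the `k`-module of natural transformations `M_{a,b} ⟶ M_{c,d}`
in the functor category `F_{X,k}` is isomorphic to `k` if `c ≤ a ≤ d ≤ b`,
and is the zero module otherwise. -/
theorem statement0 (k : Type) [CommRing k] (X : Type) [PartialOrder X] [Fintype X]
    (a b c d : X) (hab : a ≤ b) (hcd : c ≤ d) :
    (c ≤ a ∧ a ≤ d ∧ d ≤ b →
      Nonempty ((Mab k X a b ⟶ Mab k X c d) ≃ₗ[k] k)) ∧
    (¬(c ≤ a ∧ a ≤ d ∧ d ≤ b) →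
      Subsingleton (Mab k X a b ⟶ Mab k X c d)) := by
  constructor
  · rintro ⟨hca, had, hdb⟩
    refine ⟨{
      toFun := fun η => η.app a (fun _ => 1) ⟨⟨hca, had⟩⟩
      map_add' := fun η η' => rfl
      map_smul' := fun r η => rfl
      invFun := fun r => tau a b c d hca hdb r
      left_inv := ?_
      right_inv := ?_ }⟩
    · intro η
      apply NatTrans.ext; funext x; apply ModuleCat.hom_ext; apply LinearMap.ext; intro g; funext hx
      rw [tau_apply, key a b c d hab η x g hx]
      by_cases hax : a ≤ x
      · have hxb : x ≤ b := hx.down.2.trans hdb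
        rw [dif_pos hax, dif_pos ⟨⟨hax, hxb⟩, hca, had⟩]
        exact mul_comm _ _
      · rw [dif_neg hax, dif_neg (fun h => hax h.1.1)]
    · intro r
      show (tau a b c d hca hdb r).app a (fun _ => 1) ⟨⟨hca, had⟩⟩ = r
      exact (tau_apply a b c d hca hdb r a (fun _ => 1) _).trans (by rw [dif_pos (le_refl a), mul_one])
  · intro hn
    constructor
    intro η η'
    by_cases hca : c ≤ a ∧ a ≤ d
    · have hdb : ¬ d ≤ b := fun h => hn ⟨hca.1, hca.2, h⟩
      have hz : ∀ θ : Mab k X a b ⟶ Mab k X c d,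
          θ.app a (fun _ => (1 : k)) ⟨hca⟩ = 0 := by
        intro θ
        have hnat := θ.naturality (homOfLE hca.2)
        have h0 : (Mab k X a b).map (homOfLE hca.2) (fun _ => (1 : k)) = 0 :=
          obj_eq_zero a b d (fun h => hdb h.2) _
        have h3 : θ.app d ((Mab k X a b).map (homOfLE hca.2) (fun _ => (1 : k)))
            = (Mab k X c d).map (homOfLE hca.2) (θ.app a (fun _ => 1)) :=
          ConcreteCategory.congr_hom hnat (fun _ => (1 : k))
        rw [h0, map_zero] at h3
        have h4 := congrFun h3.symm ⟨⟨hcd, le_refl d⟩⟩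
        rw [Mab_map_apply c d, dif_pos hca] at h4
        exact h4
      apply NatTrans.ext; funext x; apply ModuleCat.hom_ext; apply LinearMap.ext; intro g; funext hx
      rw [key a b c d hab η x g hx, key a b c d hab η' x g hx]
      by_cases h : (a ≤ x ∧ x ≤ b) ∧ (c ≤ a ∧ a ≤ d)
      · rw [dif_pos h, dif_pos h, hz η, hz η']
      · rw [dif_neg h, dif_neg h]
    · apply NatTrans.ext; funext x; apply ModuleCat.hom_ext; apply LinearMap.ext; intro g; funext hx
      rw [key a b c d hab η x g hx, key a b c d hab η' x g hx,
        dif_neg (fun h => hca h.2), dif_neg (fun h => hca h.2)]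

end PaperInterval
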